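/- (Necessity part of Theorem 2, concrete form.) Let A, R, Q be n×n real matrices with R and Q positive definite, define H(d) = Σ_{i=0}^{d−1} A^i R (A^i)ᵀ and c(d, l) = Σ_{i=d}^{d+l−1} Tr(Q·H(i)), and let ρ(A) denote the spectral radius of A. Let g : ℕ → (0,1) be nonincreasing, let (l_j)_{j≥1} be a sequence of natural numbers with l_j ≥ 1, and set L_i = Σ_{j=1}^{i} l_j. If the series Σ_{i=1}^∞ (Π_{j=1}^{i−1} g(l_j)) · (1 − g(l_i)) · c(1, L_i) converges, then there exists j with g(l_j) · ρ(A)^{2 l_j} < 1; in particular min_{l ≥ 1} g(l)·ρ(A)^{2l} < 1. -/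

import Mathlib

open Matrix

/-- `covH A R d = ∑_{i=0}^{d-1} Aⁱ R (Aⁱ)ᵀ`, the state covariance matrix at
age-of-information `d`. -/
noncomputable def covH {n : ℕ} (A R : Matrix (Fin n) (Fin n) ℝ) (d : ℕ) :
    Matrix (Fin n) (Fin n) ℝ :=
  ∑ i ∈ Finset.range d, A ^ i * R * (A ^ i)ᵀ

/-- `stageCost A R Q d l = ∑_{i=d}^{d+l-1} Tr(Q·H(i))`, the one-stage cost of a
packet of length `l` started at age-of-information `d`. -/
noncomputable def stageCost {n : ℕ} (A R Q : Matrix (Fin n) (Fin n) ℝ)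
    (d l : ℕ) : ℝ :=
  ∑ i ∈ Finset.Ico d (d + l), (Q * covH A R i).trace

/-- The spectral radius of a real matrix: the maximum modulus of its complex
eigenvalues. -/
noncomputable def specRad {n : ℕ} (A : Matrix (Fin n) (Fin n) ℝ) : ℝ :=
  sSup ((fun z : ℂ => ‖z‖) '' spectrum ℂ (A.map Complex.ofReal))


lemma posdef_quad_lb {n : ℕ} {Q : Matrix (Fin n) (Fin n) ℝ} (hQ : Q.PosDef) :
    ∃ ε > (0:ℝ), ∀ x : Fin n → ℝ, ε * (x ⬝ᵥ x) ≤ x ⬝ᵥ Q.mulVec x := by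
  rcases Nat.eq_zero_or_pos n with hn | hn
  · subst hn
    exact ⟨1, one_pos, fun x => by simp [dotProduct]⟩
  haveI : Nontrivial (EuclideanSpace ℝ (Fin n)) :=
    nontrivial_of_ne (EuclideanSpace.single ⟨0, hn⟩ (1:ℝ)) 0 (by
      intro h
      have := congrArg (fun v : EuclideanSpace ℝ (Fin n) => v ⟨0, hn⟩) h
      simp [EuclideanSpace.single_apply] at this)
  set f : EuclideanSpace ℝ (Fin n) → ℝ := fun x => (x : Fin n → ℝ) ⬝ᵥ Q.mulVec x with hf
  have hcont : Continuous f := by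
    have : Continuous fun x : Fin n → ℝ => x ⬝ᵥ Q.mulVec x := by
      simp only [dotProduct, Matrix.mulVec]
      fun_prop
    exact this.comp (PiLp.continuous_ofLp 2 _)
  have hsph : (Metric.sphere (0 : EuclideanSpace ℝ (Fin n)) 1).Nonempty :=
    NormedSpace.sphere_nonempty.mpr zero_le_one
  obtain ⟨x₀, hx₀mem, hx₀min'⟩ :=
    (isCompact_sphere (0 : EuclideanSpace ℝ (Fin n)) 1).exists_isMinOn hsph hcont.continuousOn
  have hx₀min : ∀ x ∈ Metric.sphere (0 : EuclideanSpace ℝ (Fin n)) 1, f x₀ ≤ f x :=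
    fun x hx => hx₀min' hx
  have hx₀ne : (x₀ : Fin n → ℝ) ≠ 0 := by
    intro h
    have : ‖x₀‖ = 1 := mem_sphere_zero_iff_norm.mp hx₀mem
    rw [show x₀ = 0 by simpa using congrArg (WithLp.toLp 2) h] at this
    simp at this
  have hε : 0 < f x₀ := by
    have := hQ.re_dotProduct_pos hx₀ne
    simpa [hf] using this
  refine ⟨f x₀, hε, fun x => ?_⟩
  by_cases hx : x = 0
  · simp [hx, dotProduct]
  · set y : EuclideanSpace ℝ (Fin n) := WithLp.toLp 2 x with hy
    have hyne : y ≠ 0 := by simpa [hy] using hx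
    have hny : 0 < ‖y‖ := norm_pos_iff.mpr hyne
    set u : EuclideanSpace ℝ (Fin n) := ‖y‖⁻¹ • y with hu
    have humem : u ∈ Metric.sphere (0 : EuclideanSpace ℝ (Fin n)) 1 := by
      simp [hu, norm_smul, abs_of_pos (inv_pos.mpr hny), inv_mul_cancel₀ hny.ne']
    have hfu : f u = ‖y‖⁻¹ ^ 2 * f y := by
      simp only [hf, hu]
      have : ((‖y‖⁻¹ • y : EuclideanSpace ℝ (Fin n)) : Fin n → ℝ) = ‖y‖⁻¹ • (x : Fin n → ℝ) := rfl
      rw [this, Matrix.mulVec_smul, smul_dotProduct, dotProduct_smul]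
      simp [smul_eq_mul]; ring
    have hxx : (x ⬝ᵥ x) = ‖y‖ ^ 2 := by
      rw [EuclideanSpace.norm_sq_eq]
      simp [hy, dotProduct, sq]
    have h1 := hx₀min u humem
    rw [hfu] at h1
    have h2 : f x₀ * ‖y‖ ^ 2 ≤ f y := by
      have := mul_le_mul_of_nonneg_right h1 (sq_nonneg ‖y‖)
      calc f x₀ * ‖y‖ ^ 2 ≤ ‖y‖⁻¹ ^ 2 * f y * ‖y‖ ^ 2 := this
        _ = f y := by field_simp
    calc f x₀ * (x ⬝ᵥ x) = f x₀ * ‖y‖ ^ 2 := by rw [hxx]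
      _ ≤ f y := h2


lemma trace_conj_eq_sum {n m : ℕ} (B : Matrix (Fin m) (Fin n) ℝ) (Q : Matrix (Fin n) (Fin n) ℝ) :
    (B * Q * Bᵀ).trace = ∑ q : Fin m, (B q) ⬝ᵥ Q.mulVec (B q) := by
  simp only [Matrix.trace, Matrix.diag, Matrix.mul_apply, Matrix.transpose_apply,
    dotProduct, Matrix.mulVec, Finset.sum_mul, Finset.mul_sum]
  refine Finset.sum_congr rfl fun q _ => ?_
  rw [Finset.sum_comm]
  refine Finset.sum_congr rfl fun p _ => Finset.sum_congr rfl fun r _ => by ring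

open scoped MatrixOrder in
lemma trace_mul_psd_lb {n : ℕ} {Q X : Matrix (Fin n) (Fin n) ℝ} {ε : ℝ} (_hε : 0 ≤ ε)
    (hQ : ∀ x : Fin n → ℝ, ε * (x ⬝ᵥ x) ≤ x ⬝ᵥ Q.mulVec x) (hX : X.PosSemidef) :
    ε * X.trace ≤ (Q * X).trace := by
  obtain ⟨B, rfl⟩ : ∃ B : Matrix (Fin n) (Fin n) ℝ, X = Bᴴ * B :=
    CStarAlgebra.nonneg_iff_eq_star_mul_self.mp hX.nonneg
  have hBt : Bᴴ = Bᵀ := Matrix.conjTranspose_eq_transpose_of_trivial B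
  rw [hBt]
  have h1 : (Q * (Bᵀ * B)).trace = (B * Q * Bᵀ).trace := by
    rw [← Matrix.mul_assoc, Matrix.trace_mul_cycle]
  have h2 : (Bᵀ * B).trace = (B * 1 * Bᵀ).trace := by
    rw [Matrix.mul_one, Matrix.trace_mul_comm]
  rw [h1, h2, trace_conj_eq_sum, trace_conj_eq_sum, Finset.mul_sum]
  refine Finset.sum_le_sum fun q _ => ?_
  simpa using hQ (B q)

lemma specRad_nonneg {n : ℕ} (A : Matrix (Fin n) (Fin n) ℝ) : 0 ≤ specRad A := by
  rcases Set.eq_empty_or_nonempty (spectrum ℂ (A.map Complex.ofReal)) with h | h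
  · simp [specRad, h, Real.sSup_empty]
  · exact Real.sSup_nonneg (by rintro x ⟨μ, _, rfl⟩; exact norm_nonneg μ)

lemma map_pow_ofReal {n : ℕ} (A : Matrix (Fin n) (Fin n) ℝ) (k : ℕ) :
    (A.map Complex.ofReal) ^ k = (A ^ k).map Complex.ofReal := by
  have h : ∀ B : Matrix (Fin n) (Fin n) ℝ, B.map Complex.ofReal =
      Complex.ofRealHom.mapMatrix B := fun B => rfl
  rw [h, h, ← map_pow]

lemma specRad_pow_le {n : ℕ} (A : Matrix (Fin n) (Fin n) ℝ)
    (hne : (spectrum ℂ (A.map Complex.ofReal)).Nonempty) (k : ℕ) :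
    specRad A ^ (2 * k) ≤ (n : ℝ) * ∑ q : Fin n, ∑ p : Fin n, ((A ^ k) q p) ^ 2 := by
  set M := A.map Complex.ofReal with hM
  have hfin : (spectrum ℂ M).Finite := Matrix.finite_spectrum M
  have hmem : specRad A ∈ (fun z : ℂ => ‖z‖) '' spectrum ℂ M :=
    Set.Nonempty.csSup_mem (hne.image _) (hfin.image _)
  obtain ⟨μ, hμ, hμabs⟩ := hmem
  -- eigenvector
  have hev : Module.End.HasEigenvalue (Matrix.toLinAlgEquiv' M) μ := by
    rw [Module.End.hasEigenvalue_iff_mem_spectrum, AlgEquiv.spectrum_eq Matrix.toLinAlgEquiv' M]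
    exact hμ
  obtain ⟨v, hvec⟩ := hev.exists_hasEigenvector
  have hvne : v ≠ 0 := hvec.right
  have hv : M.mulVec v = μ • v := by
    have := hvec.apply_eq_smul
    rwa [Matrix.toLinAlgEquiv'_apply] at this
  have hvk : ∀ j : ℕ, (M ^ j).mulVec v = μ ^ j • v := by
    intro j
    induction j with
    | zero => simp
    | succ j ih =>
      rw [pow_succ', ← Matrix.mulVec_mulVec, ih, Matrix.mulVec_smul, hv, smul_smul, ← pow_succ]
  -- pick max coordinate
  have hex : ∃ q0, v q0 ≠ 0 := Function.ne_iff.mp hvne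
  obtain ⟨q0, hq0⟩ := hex
  haveI : Nonempty (Fin n) := ⟨q0⟩
  obtain ⟨q, -, hq⟩ := Finset.exists_max_image Finset.univ (fun p => ‖v p‖)
    ⟨q0, Finset.mem_univ q0⟩
  have hvq : 0 < ‖(v q)‖ :=
    lt_of_lt_of_le (norm_pos_iff.mpr hq0) (hq q0 (Finset.mem_univ q0))
  -- row sum bound
  set S : ℝ := ∑ p : Fin n, |(A ^ k) q p| with hS
  have hrow : ‖μ‖ ^ k * ‖(v q)‖ ≤ S * ‖(v q)‖ := by
    have h1 : ‖((M ^ k).mulVec v) q‖ = ‖μ‖ ^ k * ‖(v q)‖ := by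
      rw [hvk k]; simp [Pi.smul_apply, smul_eq_mul, norm_mul, norm_pow]
    have h2 : ‖((M ^ k).mulVec v) q‖ ≤ S * ‖(v q)‖ := by
      rw [Matrix.mulVec]
      calc ‖(fun j => (M ^ k) q j) ⬝ᵥ v‖
          ≤ ∑ p : Fin n, ‖((M ^ k) q p * v p)‖ := by
            exact (norm_sum_le _ _)
        _ = ∑ p : Fin n, |(A ^ k) q p| * ‖(v p)‖ := by
            refine Finset.sum_congr rfl fun p _ => ?_
            rw [norm_mul, map_pow_ofReal]
            simp [Matrix.map_apply, Complex.norm_real]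
        _ ≤ ∑ p : Fin n, |(A ^ k) q p| * ‖(v q)‖ := by
            refine Finset.sum_le_sum fun p _ => ?_
            exact mul_le_mul_of_nonneg_left (hq p (Finset.mem_univ p)) (abs_nonneg _)
        _ = S * ‖(v q)‖ := by rw [hS, Finset.sum_mul]
    rw [← h1]; exact h2
  have hρk : specRad A ^ k ≤ S := by
    rw [← hμabs]
    exact le_of_mul_le_mul_right hrow hvq
  have hSnn : 0 ≤ S := Finset.sum_nonneg fun p _ => abs_nonneg _
  have hρnn : 0 ≤ specRad A ^ k := pow_nonneg (specRad_nonneg A) k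
  calc specRad A ^ (2 * k) = (specRad A ^ k) ^ 2 := by rw [← pow_mul, mul_comm]
    _ ≤ S ^ 2 := by exact pow_le_pow_left₀ hρnn hρk 2
    _ ≤ (Finset.univ.card : ℝ) * ∑ p : Fin n, |(A ^ k) q p| ^ 2 := sq_sum_le_card_mul_sum_sq
    _ = (n : ℝ) * ∑ p : Fin n, ((A ^ k) q p) ^ 2 := by simp [sq_abs]
    _ ≤ (n : ℝ) * ∑ q : Fin n, ∑ p : Fin n, ((A ^ k) q p) ^ 2 := by
        refine mul_le_mul_of_nonneg_left ?_ (Nat.cast_nonneg n)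
        exact Finset.single_le_sum (f := fun q => ∑ p : Fin n, ((A ^ k) q p) ^ 2)
          (fun i _ => Finset.sum_nonneg fun p _ => sq_nonneg _) (Finset.mem_univ q)

/-- necessity part of Theorem 2, concrete form.  Here the packet
lengths are 0-indexed: `l j` is the `(j+1)`-th packet length and
`L i = ∑_{j<i} l j` is the total length of the first `i` packets.  If the
virtual average-cost numerator
`∑_{i=1}^∞ (∏_{j<i-1} g(l_j)) (1 − g(l_{i-1})) c(1, L_i)` converges, then some
packet length `l_j` satisfies `g(l_j)·ρ(A)^(2 l_j) < 1`; in particular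
`min_{m ≥ 1} g(m)·ρ(A)^(2m) < 1`. -/
theorem variable_length_stability_necessity {n : ℕ}
    (A R Q : Matrix (Fin n) (Fin n) ℝ)
    (hR : R.PosDef) (hQ : Q.PosDef)
    (g : ℕ → ℝ) (hg : ∀ k, g k ∈ Set.Ioo (0 : ℝ) 1) (hgmono : Antitone g)
    (l : ℕ → ℕ) (hl : ∀ j, 1 ≤ l j)
    (hsum : Summable (fun i : ℕ =>
      (∏ j ∈ Finset.range i, g (l j)) * (1 - g (l i)) *
        stageCost A R Q 1 (∑ j ∈ Finset.range (i + 1), l j))) :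
    (∃ j, g (l j) * specRad A ^ (2 * l j) < 1) ∧
      (∃ m : ℕ, 1 ≤ m ∧ g m * specRad A ^ (2 * m) < 1) := by
  suffices key : ∃ j, g (l j) * specRad A ^ (2 * l j) < 1 by
    obtain ⟨j, hj⟩ := key
    exact ⟨⟨j, hj⟩, ⟨l j, hl j, hj⟩⟩
  by_cases hρ : specRad A ≤ 1
  · refine ⟨0, ?_⟩
    have h1 : specRad A ^ (2 * l 0) ≤ 1 := pow_le_one₀ (specRad_nonneg A) hρ
    have h2 : g (l 0) * specRad A ^ (2 * l 0) ≤ g (l 0) * 1 :=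
      mul_le_mul_of_nonneg_left h1 (hg (l 0)).1.le
    calc g (l 0) * specRad A ^ (2 * l 0) ≤ g (l 0) * 1 := h2
      _ = g (l 0) := mul_one _
      _ < 1 := (hg (l 0)).2
  push_neg at hρ
  by_contra hcon
  push_neg at hcon
  set ρ := specRad A with hρdef
  have hρ0 : (0:ℝ) < ρ := lt_trans one_pos hρ
  -- spectrum nonempty
  have hne : (spectrum ℂ (A.map Complex.ofReal)).Nonempty := by
    by_contra h
    rw [Set.not_nonempty_iff_eq_empty] at h
    have : ρ = 0 := by simp [hρdef, specRad, h, Real.sSup_empty]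
    rw [this] at hρ; linarith
  have hn : 0 < n := by
    rcases Nat.eq_zero_or_pos n with h0 | h
    · exfalso; subst h0
      obtain ⟨μ, hμ⟩ := hne
      exact (spectrum.mem_iff.mp hμ) (isUnit_of_subsingleton _)
    · exact h
  obtain ⟨εQ, hεQ, hQb⟩ := posdef_quad_lb hQ
  obtain ⟨εR, hεR, hRb⟩ := posdef_quad_lb hR
  set c0 : ℝ := εQ * εR / n with hc0
  have hc0pos : 0 < c0 := by positivity
  -- per-power trace bound
  have hterm : ∀ k : ℕ, c0 * ρ ^ (2 * k) ≤ (Q * (A ^ k * R * (A ^ k)ᵀ)).trace := by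
    intro k
    set B := A ^ k with hB
    have hXpsd : (B * R * Bᵀ).PosSemidef := by
      have := hR.posSemidef.mul_mul_conjTranspose_same B
      rwa [Matrix.conjTranspose_eq_transpose_of_trivial] at this
    have hYpsd : (Bᵀ * B).PosSemidef := by
      have := Matrix.posSemidef_conjTranspose_mul_self B
      rwa [Matrix.conjTranspose_eq_transpose_of_trivial] at this
    have h1 : εQ * (B * R * Bᵀ).trace ≤ (Q * (B * R * Bᵀ)).trace :=
      trace_mul_psd_lb hεQ.le hQb hXpsd
    have h2 : (B * R * Bᵀ).trace = (R * (Bᵀ * B)).trace := by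
      rw [Matrix.trace_mul_cycle, Matrix.trace_mul_comm (Bᵀ * B) R]
    have h3 : εR * (Bᵀ * B).trace ≤ (R * (Bᵀ * B)).trace :=
      trace_mul_psd_lb hεR.le hRb hYpsd
    have h4 : (Bᵀ * B).trace = ∑ q : Fin n, ∑ p : Fin n, (B q p) ^ 2 := by
      simp only [Matrix.trace, Matrix.diag, Matrix.mul_apply, Matrix.transpose_apply, sq]
      rw [Finset.sum_comm]
    have h5 : ρ ^ (2 * k) / n ≤ ∑ q : Fin n, ∑ p : Fin n, (B q p) ^ 2 := by
      rw [div_le_iff₀ (by exact_mod_cast hn)]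
      have := specRad_pow_le A hne k
      calc ρ ^ (2 * k) ≤ (n : ℝ) * ∑ q : Fin n, ∑ p : Fin n, ((A ^ k) q p) ^ 2 := this
        _ = (∑ q : Fin n, ∑ p : Fin n, (B q p) ^ 2) * n := by rw [hB]; ring
    have hsum2 : 0 ≤ ∑ q : Fin n, ∑ p : Fin n, (B q p) ^ 2 :=
      Finset.sum_nonneg fun q _ => Finset.sum_nonneg fun p _ => sq_nonneg _
    calc c0 * ρ ^ (2 * k) = εQ * (εR * (ρ ^ (2 * k) / n)) := by rw [hc0]; ring
      _ ≤ εQ * (εR * ∑ q : Fin n, ∑ p : Fin n, (B q p) ^ 2) := by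
          refine mul_le_mul_of_nonneg_left (mul_le_mul_of_nonneg_left h5 hεR.le) hεQ.le
      _ = εQ * (εR * (Bᵀ * B).trace) := by rw [h4]
      _ ≤ εQ * (R * (Bᵀ * B)).trace := mul_le_mul_of_nonneg_left h3 hεQ.le
      _ = εQ * (B * R * Bᵀ).trace := by rw [h2]
      _ ≤ (Q * (B * R * Bᵀ)).trace := h1
  have htermnn : ∀ k : ℕ, (0:ℝ) ≤ (Q * (A ^ k * R * (A ^ k)ᵀ)).trace :=
    fun k => le_trans (by positivity) (hterm k)
  -- covH trace decomposition
  have hcov : ∀ d : ℕ, (Q * covH A R d).trace =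
      ∑ i ∈ Finset.range d, (Q * (A ^ i * R * (A ^ i)ᵀ)).trace := by
    intro d
    rw [covH, Matrix.mul_sum, Matrix.trace_sum]
  have hcovnn : ∀ d : ℕ, (0:ℝ) ≤ (Q * covH A R d).trace := by
    intro d
    rw [hcov]
    exact Finset.sum_nonneg fun i _ => htermnn i
  -- stage cost lower bound
  have hstage : ∀ L : ℕ, 1 ≤ L → c0 * ρ ^ (2 * (L - 1)) ≤ stageCost A R Q 1 L := by
    intro L hL
    have hmem : L ∈ Finset.Ico 1 (1 + L) := by
      rw [Finset.mem_Ico]; omega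
    have h1 : (Q * covH A R L).trace ≤ stageCost A R Q 1 L := by
      rw [stageCost]
      exact Finset.single_le_sum (fun d _ => hcovnn d) hmem
    have h2 : (Q * (A ^ (L-1) * R * (A ^ (L-1))ᵀ)).trace ≤ (Q * covH A R L).trace := by
      rw [hcov]
      exact Finset.single_le_sum (fun i _ => htermnn i) (Finset.mem_range.mpr (by omega))
    exact le_trans (hterm (L - 1)) (le_trans h2 h1)
  -- lower bound for each term of the series
  set δ : ℝ := (1 - g 1) * c0 with hδdef
  have hg1 : g 1 < 1 := (hg 1).2
  have hδ : 0 < δ := by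
    rw [hδdef]; have : 0 < 1 - g 1 := by linarith
    positivity
  have hmain : ∀ i : ℕ, δ ≤
      (∏ j ∈ Finset.range i, g (l j)) * (1 - g (l i)) *
        stageCost A R Q 1 (∑ j ∈ Finset.range (i + 1), l j) := by
    intro i
    set Li : ℕ := ∑ j ∈ Finset.range i, l j with hLi
    set Li1 : ℕ := ∑ j ∈ Finset.range (i + 1), l j with hLi1
    have hLisum : Li1 = Li + l i := by rw [hLi1, Finset.sum_range_succ]
    have hLi1pos : 1 ≤ Li1 := by
      have := hl i; omega
    set a : ℝ := ∏ j ∈ Finset.range i, g (l j) with ha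
    have hapos : 0 < a := Finset.prod_pos fun j _ => (hg (l j)).1
    have hab : (1:ℝ) ≤ a * ρ ^ (2 * Li) := by
      have h0 : (1:ℝ) ≤ ∏ j ∈ Finset.range i, (g (l j) * ρ ^ (2 * l j)) := by
        have := Finset.prod_le_prod (s := Finset.range i) (f := fun _ => (1:ℝ))
          (g := fun j => g (l j) * ρ ^ (2 * l j)) (fun _ _ => zero_le_one) (fun j _ => hcon j)
        simpa using this
      have h1 : ∏ j ∈ Finset.range i, (g (l j) * ρ ^ (2 * l j)) = a * ρ ^ (2 * Li) := by
        rw [Finset.prod_mul_distrib, ha, Finset.prod_pow_eq_pow_sum, hLi, Finset.mul_sum]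
      rwa [h1] at h0
    have hkey : Li1 - 1 = Li + (l i - 1) := by have := hl i; omega
    have hCi : c0 * (ρ ^ (2 * Li) * ρ ^ (2 * (l i - 1))) ≤ stageCost A R Q 1 Li1 := by
      have := hstage Li1 hLi1pos
      rwa [hkey, show 2 * (Li + (l i - 1)) = 2 * Li + 2 * (l i - 1) by ring, pow_add] at this
    have hgle : g (l i) ≤ g 1 := hgmono (hl i)
    have hgi : 0 < 1 - g (l i) := by linarith [(hg (l i)).2]
    have hcge1 : (1:ℝ) ≤ ρ ^ (2 * (l i - 1)) := one_le_pow₀ hρ.le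
    calc δ = (1 - g 1) * c0 * 1 := by rw [hδdef, mul_one]
      _ ≤ (1 - g 1) * c0 * ((a * ρ ^ (2 * Li)) * ρ ^ (2 * (l i - 1))) := by
          refine mul_le_mul_of_nonneg_left ?_ (by positivity)
          calc (1:ℝ) = 1 * 1 := (mul_one 1).symm
            _ ≤ (a * ρ ^ (2 * Li)) * ρ ^ (2 * (l i - 1)) :=
              mul_le_mul hab hcge1 zero_le_one (le_trans zero_le_one hab)
      _ = a * (1 - g 1) * (c0 * (ρ ^ (2 * Li) * ρ ^ (2 * (l i - 1)))) := by ring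
      _ ≤ a * (1 - g (l i)) * (c0 * (ρ ^ (2 * Li) * ρ ^ (2 * (l i - 1)))) := by
          refine mul_le_mul_of_nonneg_right ?_ (by positivity)
          exact mul_le_mul_of_nonneg_left (by linarith) hapos.le
      _ ≤ a * (1 - g (l i)) * stageCost A R Q 1 Li1 := by
          refine mul_le_mul_of_nonneg_left hCi (by positivity)
  have htend := hsum.tendsto_atTop_zero
  have : δ ≤ 0 := ge_of_tendsto htend (Filter.Eventually.of_forall hmain)
  linarith
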